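/- Let G be a finite group such that every class-preserving automorphism of G/Z(G) is inner. Then |Aut_c(G)| = |Aut_c(G) ∩ Aut_z(G)| · |Inn(G)| / |Z(Inn(G))|. -/

import Mathlib

variable {G : Type*}

/-- An automorphism is class-preserving if it sends each element to a conjugate of itself. -/
def IsClassPreserving [Group G] (α : G ≃* G) : Prop :=
  ∀ x : G, ∃ g : G, α x = g⁻¹ * x * g

/-- An automorphism is inner if it is conjugation by a fixed element. -/
def IsInnerAut [Group G] (α : G ≃* G) : Prop :=
  ∃ g : G, ∀ x : G, α x = g⁻¹ * x * g

/-- An automorphism is central if it induces the identity on `G/Z(G)`. -/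
def IsCentralAut [Group G] (α : G ≃* G) : Prop :=
  ∀ x : G, x⁻¹ * α x ∈ Subgroup.center G

section Aux

variable [Group G]

lemma center_apply_mem {A B : Type*} [Group A] [Group B] (e : A ≃* B) {a : A}
    (ha : a ∈ Subgroup.center A) : e a ∈ Subgroup.center B := by
  rw [Subgroup.mem_center_iff]
  intro b
  have ha' := Subgroup.mem_center_iff.mp ha
  calc b * e a = e (e.symm b) * e a := by rw [e.apply_symm_apply]
    _ = e (e.symm b * a) := by rw [map_mul]
    _ = e (a * e.symm b) := by rw [ha']
    _ = e a * b := by rw [map_mul, e.apply_symm_apply]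

lemma map_center_eq (α : G ≃* G) :
    (Subgroup.center G).map α.toMonoidHom = Subgroup.center G := by
  ext y
  simp only [Subgroup.mem_map]
  constructor
  · rintro ⟨x, hx, rfl⟩
    exact center_apply_mem α hx
  · intro hy
    exact ⟨α.symm y, center_apply_mem α.symm hy, α.apply_symm_apply y⟩

/-- Class-preserving automorphisms form a subgroup of `MulAut G`. -/
def cpSubgroup (G : Type*) [Group G] : Subgroup (MulAut G) where
  carrier := {α | IsClassPreserving α}
  one_mem' := fun x => ⟨1, by simp⟩
  mul_mem' := by
    rintro a b ha hb x
    obtain ⟨g, hg⟩ := hb x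
    obtain ⟨k, hk⟩ := ha (b x)
    refine ⟨g * k, ?_⟩
    have : (a * b) x = a (b x) := rfl
    rw [this, hk, hg]
    group
  inv_mem' := by
    rintro a ha x
    obtain ⟨g, hg⟩ := ha (a⁻¹ x)
    refine ⟨g⁻¹, ?_⟩
    have h1 : a (a⁻¹ x) = x := a.apply_symm_apply x
    rw [h1] at hg
    calc a⁻¹ x = g * (g⁻¹ * a⁻¹ x * g) * g⁻¹ := by group
      _ = g⁻¹⁻¹ * x * g⁻¹ := by rw [← hg]; group

lemma ker_conj_eq_center : (MulAut.conj (G := G)).ker = Subgroup.center G := by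
  ext g
  simp only [MonoidHom.mem_ker, MulEquiv.ext_iff, MulAut.conj_apply, MulAut.one_apply,
    Subgroup.mem_center_iff]
  constructor
  · intro hx x
    have := hx x
    rw [mul_inv_eq_iff_eq_mul] at this
    exact this.symm
  · intro hx x
    rw [mul_inv_eq_iff_eq_mul]
    exact (hx x).symm

lemma isInnerAut_iff_mem_range (α : G ≃* G) :
    IsInnerAut α ↔ α ∈ (MulAut.conj (G := G)).range := by
  constructor
  · rintro ⟨g, hg⟩
    refine ⟨g⁻¹, MulEquiv.ext fun x => ?_⟩
    simp [hg x]
  · rintro ⟨g, rfl⟩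
    exact ⟨g⁻¹, fun x => by simp⟩

lemma card_center_congr {A B : Type*} [Group A] [Group B] (e : A ≃* B) :
    Nat.card (Subgroup.center A) = Nat.card (Subgroup.center B) := by
  refine Nat.card_congr ⟨fun a => ⟨e a.1, ?_⟩, fun b => ⟨e.symm b.1, ?_⟩, ?_, ?_⟩
  · rw [Subgroup.mem_center_iff]
    intro b
    have ha := Subgroup.mem_center_iff.mp a.2
    calc b * e a.1 = e (e.symm b) * e a.1 := by rw [e.apply_symm_apply]
      _ = e (e.symm b * a.1) := by rw [map_mul]
      _ = e (a.1 * e.symm b) := by rw [ha]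
      _ = e a.1 * b := by rw [map_mul, e.apply_symm_apply]
  · rw [Subgroup.mem_center_iff]
    intro a
    have hb := Subgroup.mem_center_iff.mp b.2
    calc a * e.symm b.1 = e.symm (e a) * e.symm b.1 := by rw [e.symm_apply_apply]
      _ = e.symm (e a * b.1) := by rw [map_mul]
      _ = e.symm (b.1 * e a) := by rw [hb]
      _ = e.symm b.1 * a := by rw [map_mul, e.symm_apply_apply]
  · intro a; ext; exact e.symm_apply_apply a.1
  · intro b; ext; exact e.apply_symm_apply b.1

variable (G) in
/-- The induced automorphism on `G ⧸ Z(G)`, as a monoid hom `MulAut G →* MulAut (G ⧸ Z(G))`. -/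
def qmap : MulAut G →* MulAut (G ⧸ Subgroup.center G) where
  toFun α := QuotientGroup.congr (Subgroup.center G) (Subgroup.center G) α (map_center_eq α)
  map_one' := by
    ext x
    refine QuotientGroup.induction_on x fun z => ?_
    rfl
  map_mul' a b := by
    ext x
    refine QuotientGroup.induction_on x fun z => ?_
    rfl

lemma qmap_mk (α : MulAut G) (x : G) :
    qmap G α (QuotientGroup.mk x) = QuotientGroup.mk (α x) := rfl

lemma qmap_eq_one_iff (α : MulAut G) : qmap G α = 1 ↔ IsCentralAut α := by
  constructor
  · intro hq x
    have : qmap G α (QuotientGroup.mk x) = QuotientGroup.mk x := by rw [hq]; rfl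
    rw [qmap_mk] at this
    exact (QuotientGroup.eq ).mp this.symm
  · intro hc
    ext x
    refine QuotientGroup.induction_on x fun z => ?_
    rw [qmap_mk]
    exact ((QuotientGroup.eq).mpr (hc z)).symm

end Aux

/-- If `G` is finite and every class-preserving automorphism of `G/Z(G)` is inner, then
`|Aut_c(G)| ⬝ |Z(Inn(G))| = |Aut_c(G) ∩ Aut_z(G)| ⬝ |Inn(G)|`. -/
theorem stmt_1 (G : Type*) [Group G] [Finite G]
    (h : ∀ α : (G ⧸ Subgroup.center G) ≃* (G ⧸ Subgroup.center G),
      IsClassPreserving α → IsInnerAut α) :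
    Nat.card {α : G ≃* G // IsClassPreserving α} *
      Nat.card (Subgroup.center ↥(MulAut.conj (G := G)).range) =
    Nat.card {α : G ≃* G // IsClassPreserving α ∧ IsCentralAut α} *
      Nat.card {α : G ≃* G // IsInnerAut α} := by
  set Q := G ⧸ Subgroup.center G with hQ
  -- the restriction of qmap to the class-preserving subgroup
  set f : cpSubgroup G →* MulAut Q := (qmap G).comp (cpSubgroup G).subtype with hf
  -- equivalence Q ≃* Inn G
  have eQ : Q ≃* (MulAut.conj (G := G)).range :=
    (QuotientGroup.quotientMulEquivOfEq ker_conj_eq_center.symm).trans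
      (QuotientGroup.quotientKerEquivRange (MulAut.conj (G := G)))
  -- range of f is Inn(Q)
  have hrange : f.range = (MulAut.conj (G := Q)).range := by
    ext β
    constructor
    · rintro ⟨⟨α, hα⟩, rfl⟩
      rw [← isInnerAut_iff_mem_range]
      refine h _ fun q => ?_
      refine QuotientGroup.induction_on q fun z => ?_
      obtain ⟨g, hg⟩ := hα z
      refine ⟨QuotientGroup.mk g, ?_⟩
      show qmap G α (QuotientGroup.mk z) = _
      rw [qmap_mk, hg]
      simp
    · rintro ⟨q, rfl⟩
      obtain ⟨a, rfl⟩ := QuotientGroup.mk_surjective q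
      have hmem : MulAut.conj a ∈ cpSubgroup G := by
        intro x
        exact ⟨a⁻¹, by simp⟩
      refine ⟨⟨MulAut.conj a, hmem⟩, ?_⟩
      ext x
      refine QuotientGroup.induction_on x fun z => ?_
      show qmap G (MulAut.conj a) (QuotientGroup.mk z) = _
      rw [qmap_mk]
      simp
  -- kernel of f is class-preserving ∩ central
  have hker : Nat.card f.ker = Nat.card {α : G ≃* G // IsClassPreserving α ∧ IsCentralAut α} := by
    refine Nat.card_congr ⟨fun β => ⟨β.1.1, β.1.2, (qmap_eq_one_iff β.1.1).mp β.2⟩,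
      fun α => ⟨⟨α.1, α.2.1⟩, (qmap_eq_one_iff α.1).mpr α.2.2⟩, fun β => rfl, fun α => rfl⟩
  -- |Aut_c G| = card of subgroup
  have hcp : Nat.card {α : G ≃* G // IsClassPreserving α} = Nat.card (cpSubgroup G) := rfl
  -- |Inn G| via subtype equiv
  have hinn : Nat.card {α : G ≃* G // IsInnerAut α} = Nat.card Q := by
    rw [Nat.card_congr (Equiv.subtypeEquivRight fun α => isInnerAut_iff_mem_range α)]
    exact (Nat.card_congr eQ.toEquiv).symm
  -- |Z(Inn G)| = |Z(Q)|
  have hzinn : Nat.card (Subgroup.center ↥(MulAut.conj (G := G)).range)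
      = Nat.card (Subgroup.center Q) := (card_center_congr eQ).symm
  -- |Inn Q| = |Q ⧸ Z(Q)|
  have hinnQ : Nat.card f.range = Nat.card (Q ⧸ Subgroup.center Q) := by
    rw [hrange]
    have e2 : Q ⧸ Subgroup.center Q ≃* (MulAut.conj (G := Q)).range :=
      (QuotientGroup.quotientMulEquivOfEq ker_conj_eq_center.symm).trans
        (QuotientGroup.quotientKerEquivRange (MulAut.conj (G := Q)))
    exact (Nat.card_congr e2.toEquiv).symm
  -- decompose |Aut_c G|
  have hdecomp : Nat.card (cpSubgroup G) = Nat.card f.range * Nat.card f.ker := by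
    rw [← Nat.card_congr (QuotientGroup.quotientKerEquivRange f).toEquiv]
    exact Subgroup.card_eq_card_quotient_mul_card_subgroup f.ker
  have hQcard : Nat.card (Q ⧸ Subgroup.center Q) * Nat.card (Subgroup.center Q)
      = Nat.card Q := (Subgroup.card_eq_card_quotient_mul_card_subgroup (Subgroup.center Q)).symm
  rw [hcp, hzinn, hinn, hdecomp, ← hker, hinnQ, ← hQcard]
  ring
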